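/- Let 𝓑 = {𝟙, H_{X,Y}, H_{X,Z}, H_{Y,Z}, H_{X,Z}H_{X,Y}, H_{X,Y}H_{X,Z}} where H_{τ₁,τ₂} := (τ₁+τ₂)/√2. Then for every V ∈ M_2(ℂ): (i) for each P ∈ {X,Y,Z}, (1/6) Σ_{B ∈ 𝓑} (B P B†) V (B P B†)† = (1/3)(X V X + Y V Y + Z V Z); (ii) (1/6) Σ_{B ∈ 𝓑} (B 𝟙 B†) V (B 𝟙 B†)† = V. -/
import Mathlib


open Matrix

/-- The Pauli matrices `X, Y, Z`. -/
noncomputable def pauliX : Matrix (Fin 2) (Fin 2) ℂ := !![0, 1; 1, 0]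
noncomputable def pauliY : Matrix (Fin 2) (Fin 2) ℂ := !![0, -Complex.I; Complex.I, 0]
noncomputable def pauliZ : Matrix (Fin 2) (Fin 2) ℂ := !![1, 0; 0, -1]

/-- `H_{τ₁,τ₂} = (τ₁ + τ₂)/√2`. -/
noncomputable def Hmat (a b : Matrix (Fin 2) (Fin 2) ℂ) : Matrix (Fin 2) (Fin 2) ℂ :=
  ((Real.sqrt 2 : ℂ))⁻¹ • (a + b)

/-- The six unitaries `𝓑 = {𝟙, H_{X,Y}, H_{X,Z}, H_{Y,Z}, H_{X,Z}H_{X,Y}, H_{X,Y}H_{X,Z}}`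
whose conjugation action realizes the six permutations of `{X,Y,Z}` up to sign. -/
noncomputable def Bset : Fin 6 → Matrix (Fin 2) (Fin 2) ℂ :=
  ![1, Hmat pauliX pauliY, Hmat pauliX pauliZ, Hmat pauliY pauliZ,
    Hmat pauliX pauliZ * Hmat pauliX pauliY, Hmat pauliX pauliY * Hmat pauliX pauliZ]

section aux

lemma s2' : ((Real.sqrt 2 : ℝ) : ℂ) ^ 2 = 2 := by
  rw [← Complex.ofReal_pow, Real.sq_sqrt (by norm_num : (0:ℝ) ≤ 2)]
  norm_num

lemma s4 : ((Real.sqrt 2 : ℝ) : ℂ) ^ 4 = 4 := by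
  have : ((Real.sqrt 2 : ℝ) : ℂ) ^ 4 = (((Real.sqrt 2 : ℝ) : ℂ) ^ 2) ^ 2 := by ring
  rw [this, s2']; norm_num

lemma i3 : Complex.I ^ 3 = -Complex.I := by
  have : Complex.I ^ 3 = Complex.I ^ 2 * Complex.I := by ring
  rw [this, Complex.I_sq]; ring

-- Hermitian-ness
lemma hXYh : (Hmat pauliX pauliY)ᴴ = Hmat pauliX pauliY := by
  ext i j
  fin_cases i <;> fin_cases j <;>
    simp [Hmat, pauliX, pauliY, Matrix.conjTranspose_apply]

lemma hXZh : (Hmat pauliX pauliZ)ᴴ = Hmat pauliX pauliZ := by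
  ext i j
  fin_cases i <;> fin_cases j <;>
    simp [Hmat, pauliX, pauliZ, Matrix.conjTranspose_apply]

lemma hYZh : (Hmat pauliY pauliZ)ᴴ = Hmat pauliY pauliZ := by
  ext i j
  fin_cases i <;> fin_cases j <;>
    simp [Hmat, pauliY, pauliZ, Matrix.conjTranspose_apply]

lemma hXh : pauliXᴴ = pauliX := by
  ext i j
  fin_cases i <;> fin_cases j <;> simp [pauliX, Matrix.conjTranspose_apply]

lemma hYh : pauliYᴴ = pauliY := by
  ext i j
  fin_cases i <;> fin_cases j <;> simp [pauliY, Matrix.conjTranspose_apply]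

lemma hZh : pauliZᴴ = pauliZ := by
  ext i j
  fin_cases i <;> fin_cases j <;> simp [pauliZ, Matrix.conjTranspose_apply]

-- Unitarity
lemma uXY : Hmat pauliX pauliY * Hmat pauliX pauliY = 1 := by
  ext i j
  fin_cases i <;> fin_cases j <;>
    simp [Hmat, pauliX, pauliY, Matrix.mul_apply, Fin.sum_univ_two, Matrix.one_apply] <;>
    field_simp <;> ring_nf <;> simp [s2', s4, i3] <;> ring_nf

lemma uXZ : Hmat pauliX pauliZ * Hmat pauliX pauliZ = 1 := by
  ext i j
  fin_cases i <;> fin_cases j <;>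
    simp [Hmat, pauliX, pauliZ, Matrix.mul_apply, Fin.sum_univ_two, Matrix.one_apply] <;>
    field_simp <;> ring_nf <;> simp [s2', s4, i3] <;> ring_nf

lemma uYZ : Hmat pauliY pauliZ * Hmat pauliY pauliZ = 1 := by
  ext i j
  fin_cases i <;> fin_cases j <;>
    simp [Hmat, pauliY, pauliZ, Matrix.mul_apply, Fin.sum_univ_two, Matrix.one_apply] <;>
    field_simp <;> ring_nf <;> simp [s2', s4, i3] <;> ring_nf

-- Conjugation action: H_{XY}
lemma cXY_X : Hmat pauliX pauliY * pauliX * Hmat pauliX pauliY = pauliY := by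
  ext i j
  fin_cases i <;> fin_cases j <;>
    simp [Hmat, pauliX, pauliY, Matrix.mul_apply, Fin.sum_univ_two] <;>
    field_simp <;> ring_nf <;> simp [s2', s4, i3] <;> ring_nf

lemma cXY_Y : Hmat pauliX pauliY * pauliY * Hmat pauliX pauliY = pauliX := by
  ext i j
  fin_cases i <;> fin_cases j <;>
    simp [Hmat, pauliX, pauliY, Matrix.mul_apply, Fin.sum_univ_two] <;>
    field_simp <;> ring_nf <;> simp [s2', s4, i3] <;> ring_nf

lemma cXY_Z : Hmat pauliX pauliY * pauliZ * Hmat pauliX pauliY = -pauliZ := by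
  ext i j
  fin_cases i <;> fin_cases j <;>
    simp [Hmat, pauliX, pauliY, pauliZ, Matrix.mul_apply, Fin.sum_univ_two] <;>
    field_simp <;> ring_nf <;> simp [s2', s4, i3] <;> ring_nf

-- Conjugation action: H_{XZ}
lemma cXZ_X : Hmat pauliX pauliZ * pauliX * Hmat pauliX pauliZ = pauliZ := by
  ext i j
  fin_cases i <;> fin_cases j <;>
    simp [Hmat, pauliX, pauliZ, Matrix.mul_apply, Fin.sum_univ_two] <;>
    field_simp <;> ring_nf <;> simp [s2', s4, i3] <;> ring_nf

lemma cXZ_Y : Hmat pauliX pauliZ * pauliY * Hmat pauliX pauliZ = -pauliY := by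
  ext i j
  fin_cases i <;> fin_cases j <;>
    simp [Hmat, pauliX, pauliY, pauliZ, Matrix.mul_apply, Fin.sum_univ_two] <;>
    field_simp <;> ring_nf <;> simp [s2', s4, i3] <;> ring_nf

lemma cXZ_Z : Hmat pauliX pauliZ * pauliZ * Hmat pauliX pauliZ = pauliX := by
  ext i j
  fin_cases i <;> fin_cases j <;>
    simp [Hmat, pauliX, pauliZ, Matrix.mul_apply, Fin.sum_univ_two] <;>
    field_simp <;> ring_nf <;> simp [s2', s4, i3] <;> ring_nf

-- Conjugation action: H_{YZ}
lemma cYZ_X : Hmat pauliY pauliZ * pauliX * Hmat pauliY pauliZ = -pauliX := by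
  ext i j
  fin_cases i <;> fin_cases j <;>
    simp [Hmat, pauliX, pauliY, pauliZ, Matrix.mul_apply, Fin.sum_univ_two] <;>
    field_simp <;> ring_nf <;> simp [s2', s4, i3] <;> ring_nf

lemma cYZ_Y : Hmat pauliY pauliZ * pauliY * Hmat pauliY pauliZ = pauliZ := by
  ext i j
  fin_cases i <;> fin_cases j <;>
    simp [Hmat, pauliY, pauliZ, Matrix.mul_apply, Fin.sum_univ_two] <;>
    field_simp <;> ring_nf <;> simp [s2', s4, i3] <;> ring_nf

lemma cYZ_Z : Hmat pauliY pauliZ * pauliZ * Hmat pauliY pauliZ = pauliY := by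
  ext i j
  fin_cases i <;> fin_cases j <;>
    simp [Hmat, pauliY, pauliZ, Matrix.mul_apply, Fin.sum_univ_two] <;>
    field_simp <;> ring_nf <;> simp [s2', s4, i3] <;> ring_nf

-- Reduction of Bset conjugations to the Hmat conjugations
lemma e0 (M : Matrix (Fin 2) (Fin 2) ℂ) : Bset 0 * M * (Bset 0)ᴴ = M := by
  simp [Bset]

lemma e1 (M : Matrix (Fin 2) (Fin 2) ℂ) :
    Bset 1 * M * (Bset 1)ᴴ = Hmat pauliX pauliY * M * Hmat pauliX pauliY := by
  simp [Bset, hXYh]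

lemma e2 (M : Matrix (Fin 2) (Fin 2) ℂ) :
    Bset 2 * M * (Bset 2)ᴴ = Hmat pauliX pauliZ * M * Hmat pauliX pauliZ := by
  simp [Bset, hXZh]

lemma e3 (M : Matrix (Fin 2) (Fin 2) ℂ) :
    Bset 3 * M * (Bset 3)ᴴ = Hmat pauliY pauliZ * M * Hmat pauliY pauliZ := by
  simp [Bset, hYZh]

lemma e4 (M : Matrix (Fin 2) (Fin 2) ℂ) :
    Bset 4 * M * (Bset 4)ᴴ =
      Hmat pauliX pauliZ * (Hmat pauliX pauliY * M * Hmat pauliX pauliY) * Hmat pauliX pauliZ := by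
  have h : Bset 4 = Hmat pauliX pauliZ * Hmat pauliX pauliY := rfl
  rw [h]; simp only [Matrix.conjTranspose_mul, hXYh, hXZh, mul_assoc]

lemma e5 (M : Matrix (Fin 2) (Fin 2) ℂ) :
    Bset 5 * M * (Bset 5)ᴴ =
      Hmat pauliX pauliY * (Hmat pauliX pauliZ * M * Hmat pauliX pauliZ) * Hmat pauliX pauliY := by
  have h : Bset 5 = Hmat pauliX pauliY * Hmat pauliX pauliZ := rfl
  rw [h]; simp only [Matrix.conjTranspose_mul, hXYh, hXZh, mul_assoc]

lemma u0 : Bset 0 * (Bset 0)ᴴ = 1 := by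
  have h : Bset 0 = 1 := rfl
  rw [h]; simp

lemma u1 : Bset 1 * (Bset 1)ᴴ = 1 := by
  have h : Bset 1 = Hmat pauliX pauliY := rfl
  rw [h, hXYh, uXY]

lemma u2 : Bset 2 * (Bset 2)ᴴ = 1 := by
  have h : Bset 2 = Hmat pauliX pauliZ := rfl
  rw [h, hXZh, uXZ]

lemma u3 : Bset 3 * (Bset 3)ᴴ = 1 := by
  have h : Bset 3 = Hmat pauliY pauliZ := rfl
  rw [h, hYZh, uYZ]

lemma u4 : Bset 4 * (Bset 4)ᴴ = 1 := by
  have h : Bset 4 = Hmat pauliX pauliZ * Hmat pauliX pauliY := rfl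
  rw [h, Matrix.conjTranspose_mul, hXYh, hXZh,
    show Hmat pauliX pauliZ * Hmat pauliX pauliY * (Hmat pauliX pauliY * Hmat pauliX pauliZ) =
      Hmat pauliX pauliZ * (Hmat pauliX pauliY * Hmat pauliX pauliY) * Hmat pauliX pauliZ by
        noncomm_ring, uXY, mul_one, uXZ]

lemma u5 : Bset 5 * (Bset 5)ᴴ = 1 := by
  have h : Bset 5 = Hmat pauliX pauliY * Hmat pauliX pauliZ := rfl
  rw [h, Matrix.conjTranspose_mul, hXYh, hXZh,
    show Hmat pauliX pauliY * Hmat pauliX pauliZ * (Hmat pauliX pauliZ * Hmat pauliX pauliY) =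
      Hmat pauliX pauliY * (Hmat pauliX pauliZ * Hmat pauliX pauliZ) * Hmat pauliX pauliY by
        noncomm_ring, uXZ, mul_one, uXY]

lemma term_neg (M V : Matrix (Fin 2) (Fin 2) ℂ) :
    (-M) * V * (-M)ᴴ = M * V * Mᴴ := by
  simp

end aux

/-- For every `V ∈ M₂(ℂ)`:
(i) for each `P ∈ {X,Y,Z}`,
`(1/6) Σ_{B ∈ 𝓑} (BPB†) V (BPB†)† = (1/3)(XVX + YVY + ZVZ)`;
(ii) `(1/6) Σ_{B ∈ 𝓑} (B𝟙B†) V (B𝟙B†)† = V`. -/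
theorem local_clifford_twirl_identities (V : Matrix (Fin 2) (Fin 2) ℂ) :
    (∀ P : Matrix (Fin 2) (Fin 2) ℂ, (P = pauliX ∨ P = pauliY ∨ P = pauliZ) →
      ((6 : ℂ))⁻¹ • ∑ i : Fin 6,
          (Bset i * P * (Bset i)ᴴ) * V * (Bset i * P * (Bset i)ᴴ)ᴴ
        = ((3 : ℂ))⁻¹ • (pauliX * V * pauliX + pauliY * V * pauliY + pauliZ * V * pauliZ)) ∧
    ((6 : ℂ))⁻¹ • ∑ i : Fin 6,
        (Bset i * 1 * (Bset i)ᴴ) * V * (Bset i * 1 * (Bset i)ᴴ)ᴴ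
      = V := by
  constructor
  · intro P hP
    rw [Fin.sum_univ_six]
    rcases hP with h | h | h <;> subst h <;>
      simp only [e0, e1, e2, e3, e4, e5, mul_neg, neg_mul, cXY_X, cXY_Y, cXY_Z, cXZ_X, cXZ_Y,
        cXZ_Z, cYZ_X, cYZ_Y, cYZ_Z, neg_neg, Matrix.conjTranspose_neg, hXh, hYh, hZh] <;>
      module
  · rw [Fin.sum_univ_six]
    simp only [mul_one, u0, u1, u2, u3, u4, u5, one_mul, Matrix.conjTranspose_one]
    module
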